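/- Let f: ℝ → ℝ be differentiable at p with f(p) > 0, let ρ + p > 0, and define r(ρ,p) = f(p)·√(ρ+p) and F(p) = 2 f'(p)/f(p). Then: (a) r − 2(ρ+p) ∂_ρ r = 0; (b) if 1 + (ρ+p)F(p) ≠ 0 then ∂_p r ≠ 0 and χ := (1/∂_p r)(r/(ρ+p) − ∂_ρ r) = 1/(1 + (ρ+p)F(p)); (c) if moreover F is differentiable at p, 1 + (ρ+p)F(p) > 0, and we set χ(ρ,p) = 1/(1 + (ρ+p)F(p)), then the H₁ conditions 0 < χ < 1 and (ρ+p)(χ ∂_p χ + ∂_ρ χ) + 2χ(1 − χ) > 0 hold at (ρ,p) if and only if F(p) > 0 and F'(p) < F(p)². -/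

import Mathlib

set_option maxHeartbeats 1000000 in
theorem stmt_10 (f : ℝ → ℝ) (ρ p : ℝ)
    (hf : DifferentiableAt ℝ f p) (hfpos : 0 < f p) (hsum : 0 < ρ + p) :
    (f p * Real.sqrt (ρ + p) -
        2 * (ρ + p) *
          fderiv ℝ (fun q : ℝ × ℝ => f q.2 * Real.sqrt (q.1 + q.2)) (ρ, p) (1, 0) = 0) ∧
      (1 + (ρ + p) * (2 * deriv f p / f p) ≠ 0 →
        fderiv ℝ (fun q : ℝ × ℝ => f q.2 * Real.sqrt (q.1 + q.2)) (ρ, p) (0, 1) ≠ 0 ∧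
          (1 / fderiv ℝ (fun q : ℝ × ℝ => f q.2 * Real.sqrt (q.1 + q.2)) (ρ, p) (0, 1)) *
              (f p * Real.sqrt (ρ + p) / (ρ + p) -
                fderiv ℝ (fun q : ℝ × ℝ => f q.2 * Real.sqrt (q.1 + q.2)) (ρ, p) (1, 0)) =
            1 / (1 + (ρ + p) * (2 * deriv f p / f p))) ∧
      (DifferentiableAt ℝ (fun x => 2 * deriv f x / f x) p →
        0 < 1 + (ρ + p) * (2 * deriv f p / f p) →
        ((0 < 1 / (1 + (ρ + p) * (2 * deriv f p / f p)) ∧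
            1 / (1 + (ρ + p) * (2 * deriv f p / f p)) < 1 ∧
            0 < (ρ + p) *
                  ((1 / (1 + (ρ + p) * (2 * deriv f p / f p))) *
                      fderiv ℝ
                        (fun q : ℝ × ℝ => 1 / (1 + (q.1 + q.2) * (2 * deriv f q.2 / f q.2)))
                        (ρ, p) (0, 1) +
                    fderiv ℝ
                      (fun q : ℝ × ℝ => 1 / (1 + (q.1 + q.2) * (2 * deriv f q.2 / f q.2)))
                      (ρ, p) (1, 0)) +
                2 * (1 / (1 + (ρ + p) * (2 * deriv f p / f p))) *
                  (1 - 1 / (1 + (ρ + p) * (2 * deriv f p / f p)))) ↔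
          (0 < 2 * deriv f p / f p ∧
            deriv (fun x => 2 * deriv f x / f x) p < (2 * deriv f p / f p) ^ 2))) := by
  have hsne : (ρ + p) ≠ 0 := hsum.ne'
  have hsqpos : 0 < Real.sqrt (ρ + p) := Real.sqrt_pos.mpr hsum
  have hsqne : Real.sqrt (ρ + p) ≠ 0 := hsqpos.ne'
  have hsq : Real.sqrt (ρ + p) * Real.sqrt (ρ + p) = ρ + p := Real.mul_self_sqrt hsum.le
  have hfne : f p ≠ 0 := hfpos.ne'
  -- fderiv of r
  have hadd : HasFDerivAt (fun q : ℝ × ℝ => q.1 + q.2)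
      (ContinuousLinearMap.fst ℝ ℝ ℝ + ContinuousLinearMap.snd ℝ ℝ ℝ) (ρ, p) :=
    hasFDerivAt_fst.add hasFDerivAt_snd
  have hsqc : HasFDerivAt (fun q : ℝ × ℝ => Real.sqrt (q.1 + q.2))
      ((1 / (2 * Real.sqrt (ρ + p))) •
        (ContinuousLinearMap.fst ℝ ℝ ℝ + ContinuousLinearMap.snd ℝ ℝ ℝ)) (ρ, p) :=
    (Real.hasDerivAt_sqrt hsne).comp_hasFDerivAt (ρ, p) hadd
  have hfc : HasFDerivAt (fun q : ℝ × ℝ => f q.2)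
      ((deriv f p) • (ContinuousLinearMap.snd ℝ ℝ ℝ)) (ρ, p) :=
    hf.hasDerivAt.comp_hasFDerivAt (ρ, p) hasFDerivAt_snd
  have hr : HasFDerivAt (fun q : ℝ × ℝ => f q.2 * Real.sqrt (q.1 + q.2)) _ (ρ, p) := hfc.mul hsqc
  have hA : fderiv ℝ (fun q : ℝ × ℝ => f q.2 * Real.sqrt (q.1 + q.2)) (ρ, p) (1, 0)
      = f p * (1 / (2 * Real.sqrt (ρ + p))) := by
    rw [hr.fderiv]
    simp
  have hB : fderiv ℝ (fun q : ℝ × ℝ => f q.2 * Real.sqrt (q.1 + q.2)) (ρ, p) (0, 1)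
      = f p * (1 / (2 * Real.sqrt (ρ + p))) + Real.sqrt (ρ + p) * deriv f p := by
    rw [hr.fderiv]
    simp
  refine ⟨?_, ?_, ?_⟩
  · rw [hA]
    rw [← hsq]
    field_simp
    simp only [Real.sqrt_mul_self hsqpos.le, Real.sqrt_sq hsqpos.le]
    linear_combination
  · intro hD
    have hD2 : f p + (ρ + p) * (2 * deriv f p) ≠ 0 := by
      intro h
      apply hD
      field_simp
      linarith
    have hBval : fderiv ℝ (fun q : ℝ × ℝ => f q.2 * Real.sqrt (q.1 + q.2)) (ρ, p) (0, 1)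
        = f p / (2 * Real.sqrt (ρ + p)) * (1 + (ρ + p) * (2 * deriv f p / f p)) := by
      rw [hB, ← hsq]
      field_simp
      simp only [Real.sqrt_mul_self hsqpos.le, Real.sqrt_sq hsqpos.le]
    have hc : f p / (2 * Real.sqrt (ρ + p)) ≠ 0 := by positivity
    have hBne : fderiv ℝ (fun q : ℝ × ℝ => f q.2 * Real.sqrt (q.1 + q.2)) (ρ, p) (0, 1) ≠ 0 := by
      rw [hBval]; exact mul_ne_zero hc hD
    refine ⟨hBne, ?_⟩
    rw [hBval, hA]
    have key : f p * Real.sqrt (ρ + p) / (ρ + p) - f p * (1 / (2 * Real.sqrt (ρ + p)))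
        = f p / (2 * Real.sqrt (ρ + p)) := by
      rw [← hsq]
      field_simp
      simp only [Real.sqrt_mul_self hsqpos.le, Real.sqrt_sq hsqpos.le]
      linear_combination
    rw [key]
    rw [one_div, mul_inv, mul_comm ((f p / (2 * Real.sqrt (ρ + p)))⁻¹) _, mul_assoc,
      inv_mul_cancel₀ hc, mul_one, one_div]
  · intro hF hD
    have hDne : 1 + (ρ + p) * (2 * deriv f p / f p) ≠ 0 := hD.ne'
    -- fderiv of Φ
    have hFc : HasFDerivAt (fun q : ℝ × ℝ => 2 * deriv f q.2 / f q.2)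
        ((deriv (fun x => 2 * deriv f x / f x) p) • (ContinuousLinearMap.snd ℝ ℝ ℝ)) (ρ, p) :=
      HasDerivAt.comp_hasFDerivAt (h₂ := fun x => 2 * deriv f x / f x) (f := Prod.snd) (ρ, p) hF.hasDerivAt hasFDerivAt_snd
    have hu : HasFDerivAt (fun q : ℝ × ℝ => 1 + (q.1 + q.2) * (2 * deriv f q.2 / f q.2))
        ((ρ + p) • ((deriv (fun x => 2 * deriv f x / f x) p) • (ContinuousLinearMap.snd ℝ ℝ ℝ)) +
          (2 * deriv f p / f p) •
            (ContinuousLinearMap.fst ℝ ℝ ℝ + ContinuousLinearMap.snd ℝ ℝ ℝ)) (ρ, p) := by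
      simpa [Pi.add_def, Pi.mul_def] using (hasFDerivAt_const (1:ℝ) ((ρ, p) : ℝ × ℝ)).add (hadd.mul hFc)
    have hinv : HasDerivAt (fun y : ℝ => y⁻¹)
        (-((1 + (ρ + p) * (2 * deriv f p / f p)) ^ 2)⁻¹)
        ((fun q : ℝ × ℝ => 1 + (q.1 + q.2) * (2 * deriv f q.2 / f q.2)) (ρ, p)) := by
      simpa using hasDerivAt_inv hDne
    have hcomp := hinv.comp_hasFDerivAt (ρ, p) hu
    have hfun : (fun q : ℝ × ℝ => 1 / (1 + (q.1 + q.2) * (2 * deriv f q.2 / f q.2)))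
        = ((fun y : ℝ => y⁻¹) ∘ fun q : ℝ × ℝ => 1 + (q.1 + q.2) * (2 * deriv f q.2 / f q.2)) := by
      funext q
      simp [one_div]
    have hΦ : HasFDerivAt
        (fun q : ℝ × ℝ => 1 / (1 + (q.1 + q.2) * (2 * deriv f q.2 / f q.2)))
        ((-((1 + (ρ + p) * (2 * deriv f p / f p)) ^ 2)⁻¹) •
          ((ρ + p) • ((deriv (fun x => 2 * deriv f x / f x) p) • (ContinuousLinearMap.snd ℝ ℝ ℝ)) +
            (2 * deriv f p / f p) •
              (ContinuousLinearMap.fst ℝ ℝ ℝ + ContinuousLinearMap.snd ℝ ℝ ℝ))) (ρ, p) := by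
      rw [hfun]; exact hcomp
    have hΦA : fderiv ℝ
        (fun q : ℝ × ℝ => 1 / (1 + (q.1 + q.2) * (2 * deriv f q.2 / f q.2))) (ρ, p) (1, 0)
        = -((1 + (ρ + p) * (2 * deriv f p / f p)) ^ 2)⁻¹ * (2 * deriv f p / f p) := by
      rw [hΦ.fderiv]; simp
    have hΦB : fderiv ℝ
        (fun q : ℝ × ℝ => 1 / (1 + (q.1 + q.2) * (2 * deriv f q.2 / f q.2))) (ρ, p) (0, 1)
        = -((1 + (ρ + p) * (2 * deriv f p / f p)) ^ 2)⁻¹ *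
            ((ρ + p) * deriv (fun x => 2 * deriv f x / f x) p + 2 * deriv f p / f p) := by
      rw [hΦ.fderiv]; simp; ring
    rw [hΦA, hΦB]
    set F : ℝ := 2 * deriv f p / f p with hFdef
    set F' : ℝ := deriv (fun x => 2 * deriv f x / f x) p with hF'def
    set D : ℝ := 1 + (ρ + p) * F with hDdef
    have hE : (ρ + p) * ((1 / D) * (-(D ^ 2)⁻¹ * ((ρ + p) * F' + F)) +
          -(D ^ 2)⁻¹ * F) + 2 * (1 / D) * (1 - 1 / D)
        = (ρ + p) ^ 2 * (F ^ 2 - F') / D ^ 3 := by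
      rw [hDdef]
      have hD0 : 1 + (ρ + p) * F ≠ 0 := hDne
      field_simp
      ring
    rw [hE]
    constructor
    · rintro ⟨-, h2, h3⟩
      have hD1 : 1 < D := by
        rw [div_lt_one hD] at h2; exact h2
      have hFpos : 0 < F := by
        by_contra hcon
        push_neg at hcon
        rw [hDdef] at hD1
        nlinarith
      refine ⟨hFpos, ?_⟩
      have hD3 : 0 < D ^ 3 := pow_pos hD 3
      have h3' : 0 < (ρ + p) ^ 2 * (F ^ 2 - F') := by
        by_contra hcon
        push_neg at hcon
        have : (ρ + p) ^ 2 * (F ^ 2 - F') / D ^ 3 ≤ 0 :=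
          div_nonpos_of_nonpos_of_nonneg hcon hD3.le
        linarith
      nlinarith [sq_nonneg (ρ + p)]
    · rintro ⟨hFpos, hF'lt⟩
      refine ⟨by positivity, ?_, ?_⟩
      · rw [div_lt_one hD, hDdef]
        nlinarith
      · apply div_pos
        · apply mul_pos (by positivity); linarith
        · exact pow_pos hD 3
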